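/- Let A be a commutative ring and B a finitely presented commutative A-algebra. Let μ: B ⊗_A B → B be the multiplication map and J = ker μ. Then J is a finitely presented module over the ring B ⊗_A B. -/

import Mathlib

open TensorProduct

open Function

section Helpers

variable {R S : Type*} [CommRing R] [CommRing S] [Algebra R S]

/-- The componentwise algebra map `(Fin m → R) →ₗ[R] (Fin m → S)`. -/
private def piAlg (m : ℕ) : (Fin m → R) →ₗ[R] (Fin m → S) :=
  LinearMap.pi (fun i => (Algebra.linearMap R S).comp (LinearMap.proj i))

private lemma piAlg_apply (m : ℕ) (v : Fin m → R) (i : Fin m) :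
    piAlg (S := S) m v i = algebraMap R S (v i) := rfl

private lemma piAlg_surjective (m : ℕ) (hs : Surjective (algebraMap R S)) :
    Surjective (piAlg (R := R) (S := S) m) := by
  intro w
  choose u hu using fun i => hs (w i)
  exact ⟨u, funext hu⟩

/-- Finite presentation descends along a surjection of base rings. -/
private lemma fp_descend (hs : Surjective (algebraMap R S))
    (M : Type*) [AddCommGroup M] [Module R M] [Module S M] [IsScalarTower R S M]
    [Module.FinitePresentation R M] : Module.FinitePresentation S M := by
  classical
  obtain ⟨m, l, hl⟩ := Module.Finite.exists_fin' R M
  obtain ⟨T, hT⟩ := Module.FinitePresentation.fg_ker l hl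
  let g : Fin m → M := fun i => l (Pi.single i 1)
  have hlv : ∀ v : Fin m → R, l v = ∑ i, v i • g i := by
    intro v
    conv_lhs => rw [pi_eq_sum_univ v]
    rw [map_sum]
    refine Finset.sum_congr rfl fun i _ => ?_
    rw [map_smul]
    have hsingle : (fun j => if i = j then (1 : R) else 0) = Pi.single i 1 := by
      funext j
      rcases eq_or_ne i j with h | h
      · subst h; simp
      · simp [Pi.single_apply, h, Ne.symm h]
    rw [hsingle]
  let l' : (Fin m → S) →ₗ[S] M :=
    ∑ i, LinearMap.smulRight (LinearMap.proj i : (Fin m → S) →ₗ[S] S) (g i)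
  have hl'v : ∀ v : Fin m → S, l' v = ∑ i, v i • g i := by
    intro v
    simp [l', LinearMap.sum_apply]
  have key : ∀ v : Fin m → R, l' (piAlg m v) = l v := by
    intro v
    rw [hl'v, hlv]
    refine Finset.sum_congr rfl fun i _ => ?_
    rw [piAlg_apply, algebraMap_smul]
  have hl' : Surjective l' := by
    intro x
    obtain ⟨v, hv⟩ := hl x
    exact ⟨piAlg m v, by rw [key, hv]⟩
  apply Module.finitePresentation_of_free_of_surjective l' hl'
  refine ⟨T.image (piAlg m), ?_⟩
  rw [Finset.coe_image]
  apply le_antisymm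
  · rw [Submodule.span_le]
    rintro _ ⟨t, ht, rfl⟩
    have htk : t ∈ LinearMap.ker l := hT ▸ Submodule.subset_span ht
    simpa [LinearMap.mem_ker, key] using htk
  · intro x hx
    obtain ⟨v, rfl⟩ := piAlg_surjective m hs x
    have hv : v ∈ LinearMap.ker l := by
      rw [LinearMap.mem_ker, ← key]
      exact hx
    rw [← hT] at hv
    refine Submodule.span_induction (p := fun y _ =>
        piAlg (S := S) m y ∈ Submodule.span S (piAlg (S := S) m '' (T : Set (Fin m → R))))
      ?_ ?_ ?_ ?_ hv
    · intro y hy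
      exact Submodule.subset_span ⟨y, hy, rfl⟩
    · simp
    · intro y z _ _ hy hz
      rw [map_add]
      exact Submodule.add_mem _ hy hz
    · intro r y _ hy
      have : piAlg (S := S) m (r • y) = algebraMap R S r • piAlg (S := S) m y := by
        funext i
        simp [piAlg_apply, Algebra.smul_def]
      rw [this]
      exact Submodule.smul_mem _ _ hy

/-- Finite presentation ascends along a surjection of base rings with finitely
generated kernel. -/
private lemma fp_ascend (hs : Surjective (algebraMap R S))
    (hk : (RingHom.ker (algebraMap R S)).FG)
    (M : Type*) [AddCommGroup M] [Module R M] [Module S M] [IsScalarTower R S M]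
    [Module.FinitePresentation S M] : Module.FinitePresentation R M := by
  classical
  obtain ⟨m, l', hl'⟩ := Module.Finite.exists_fin' S M
  obtain ⟨T, hT⟩ := Module.FinitePresentation.fg_ker l' hl'
  let p := piAlg (R := R) (S := S) m
  let l : (Fin m → R) →ₗ[R] M := (l'.restrictScalars R).comp p
  have hl : Surjective l := by
    intro x
    obtain ⟨v, hv⟩ := hl' x
    obtain ⟨u, hu⟩ := piAlg_surjective m hs v
    exact ⟨u, by simp [l, p, hu, hv]⟩
  apply Module.finitePresentation_of_free_of_surjective l hl
  apply Submodule.fg_of_fg_map_of_fg_inf_ker p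
  · have hmap : Submodule.map p (LinearMap.ker l) =
        (LinearMap.ker l').restrictScalars R := by
      ext w
      constructor
      · rintro ⟨v, hv, rfl⟩
        exact hv
      · intro hw
        obtain ⟨v, rfl⟩ := piAlg_surjective m hs w
        exact ⟨v, hw, rfl⟩
    rw [hmap, ← hT, Submodule.restrictScalars_span R S hs]
    exact ⟨T, rfl⟩
  · have h1 : LinearMap.ker p ≤ LinearMap.ker l := by
      intro v hv
      simp only [LinearMap.mem_ker] at hv ⊢
      simp [l, hv]
    rw [inf_eq_right.mpr h1]
    have h2 : LinearMap.ker p =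
        Submodule.pi Set.univ (fun _ : Fin m => RingHom.ker (algebraMap R S)) := by
      ext v
      simp only [LinearMap.mem_ker, Submodule.mem_pi, Set.mem_univ, forall_true_left,
        RingHom.mem_ker]
      constructor
      · intro h i
        exact congrFun h i
      · intro h
        funext i
        exact h i
    rw [h2]
    exact Submodule.fg_pi (fun _ => hk)

/-- Pulling back a finitely presented ideal along a surjection whose kernel is
generated by a single nonzerodivisor yields a finitely presented ideal. -/
private lemma fp_comap (hs : Surjective (algebraMap R S)) {t : R}
    (hkt : RingHom.ker (algebraMap R S) = Ideal.span {t}) (ht : t ∈ nonZeroDivisors R)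
    (K' : Ideal S) [Module.FinitePresentation S K'] :
    Module.FinitePresentation R (Ideal.comap (algebraMap R S) K') := by
  haveI : Module.FinitePresentation R K' :=
    fp_ascend hs (hkt ▸ ⟨{t}, by simp⟩) K'
  set K := Ideal.comap (algebraMap R S) K' with hK
  have htker : algebraMap R S t = 0 := by
    have : t ∈ RingHom.ker (algebraMap R S) := hkt ▸ Ideal.subset_span rfl
    exact this
  have htK : t ∈ K := by
    simp [hK, Ideal.mem_comap, htker]
  let π : K →ₗ[R] K' :=
    { toFun := fun x => ⟨algebraMap R S x.1, x.2⟩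
      map_add' := by intros; ext; simp
      map_smul' := by
        intros r x
        ext
        simp [Algebra.smul_def, Submodule.coe_smul, smul_eq_mul, map_mul] }
  have hπ : Surjective π := by
    rintro ⟨y, hy⟩
    obtain ⟨x, rfl⟩ := hs y
    exact ⟨⟨x, hy⟩, rfl⟩
  let ν : R →ₗ[R] LinearMap.ker π :=
    { toFun := fun r => ⟨⟨r * t, K.mul_mem_left r htK⟩, by
        have : algebraMap R S (r * t) = 0 := by rw [map_mul, htker, mul_zero]
        simp only [LinearMap.mem_ker]
        ext
        exact this⟩
      map_add' := by intros; ext; simp [add_mul]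
      map_smul' := by intros; ext; simp [mul_assoc, smul_eq_mul] }
  have hν : Surjective ν := by
    rintro ⟨⟨x, hxK⟩, hx⟩
    have hx0 : algebraMap R S x = 0 :=
      congrArg Subtype.val (LinearMap.mem_ker.mp hx)
    have : x ∈ Ideal.span {t} := by
      rw [← hkt]
      exact hx0
    obtain ⟨r, rfl⟩ := Ideal.mem_span_singleton.mp this
    exact ⟨r, by ext; simp [ν, mul_comm]⟩
  haveI : Module.FinitePresentation R (LinearMap.ker π) := by
    apply Module.finitePresentation_of_surjective ν hν
    have : LinearMap.ker ν = ⊥ := by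
      rw [LinearMap.ker_eq_bot]
      intro r r' h
      have : r * t = r' * t :=
        congrArg (fun x => (Subtype.val (Subtype.val x) : R)) h
      exact mul_cancel_right_mem_nonZeroDivisors ht |>.mp this
    rw [this]
    exact Submodule.fg_bot
  exact Module.finitePresentation_of_ker π hπ

/-- Pushing forward: if the preimage ideal is finitely presented and the kernel of the
surjection is finitely generated, the image ideal is finitely presented. -/
private lemma fp_map (hs : Surjective (algebraMap R S))
    (hk : (RingHom.ker (algebraMap R S)).FG)
    (K' : Ideal S)
    (h : Module.FinitePresentation R (Ideal.comap (algebraMap R S) K')) :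
    Module.FinitePresentation S K' := by
  set K := Ideal.comap (algebraMap R S) K' with hKdef
  let π : K →ₗ[R] K' :=
    { toFun := fun x => ⟨algebraMap R S x.1, x.2⟩
      map_add' := by intros; ext; simp
      map_smul' := by
        intros r x
        ext
        simp [Algebra.smul_def, Submodule.coe_smul, smul_eq_mul, map_mul] }
  have hπ : Surjective π := by
    rintro ⟨y, hy⟩
    obtain ⟨x, rfl⟩ := hs y
    exact ⟨⟨x, hy⟩, rfl⟩
  have hkerfg : (LinearMap.ker π).FG := by
    have he : LinearMap.ker π =
        Submodule.comap (Submodule.subtype (K : Submodule R R))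
          (RingHom.ker (algebraMap R S) : Submodule R R) := by
      ext x
      simp only [LinearMap.mem_ker, Submodule.mem_comap, Submodule.coe_subtype,
        RingHom.mem_ker]
      constructor
      · intro hx
        exact congrArg Subtype.val hx
      · intro hx
        exact Subtype.ext hx
    rw [he]
    apply Submodule.fg_of_fg_map_injective _ (Submodule.injective_subtype _)
    rw [Submodule.map_comap_subtype]
    have hle : (RingHom.ker (algebraMap R S) : Submodule R R) ≤ K := by
      intro x hx
      have hx0 : algebraMap R S x = 0 := hx
      simp [hKdef, Ideal.mem_comap, hx0]
    rw [inf_eq_right.mpr hle]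
    exact hk
  haveI : Module.FinitePresentation R K' :=
    Module.finitePresentation_of_surjective π hπ hkerfg
  exact fp_descend hs K'

end Helpers

universe u

/-- The kernel of an evaluation map `S[X_1, ..., X_n] → S` is a finitely presented
module over the polynomial ring. -/
private lemma ker_aeval_fp :
    ∀ (n : ℕ) (S : Type u) (_ : CommRing S) (b : Fin n → S),
    Module.FinitePresentation (MvPolynomial (Fin n) S)
      (RingHom.ker (MvPolynomial.aeval b : MvPolynomial (Fin n) S →ₐ[S] S)) := by
  intro n
  induction n with
  | zero =>
    intro S _ b
    have hbot : RingHom.ker (MvPolynomial.aeval b : MvPolynomial (Fin 0) S →ₐ[S] S) = ⊥ := by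
      rw [eq_bot_iff]
      intro x hx
      obtain ⟨s, rfl⟩ := MvPolynomial.C_surjective (Fin 0) x
      have hs0 : s = 0 := by simpa using hx
      simp [hs0]
    rw [hbot]
    refine Module.finitePresentation_of_surjective
      (0 : MvPolynomial (Fin 0) S →ₗ[MvPolynomial (Fin 0) S] (⊥ : Ideal (MvPolynomial (Fin 0) S)))
      ?_ ?_
    · intro x
      exact ⟨0, Subsingleton.elim _ _⟩
    · rw [LinearMap.ker_zero]
      exact Module.Finite.fg_top
  | succ n IH =>
    intro S _ b
    classical
    let E := MvPolynomial (Fin n) S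
    let e : MvPolynomial (Fin (n + 1)) S ≃ₐ[S] Polynomial E := MvPolynomial.finSuccEquiv S n
    let g : MvPolynomial (Fin (n + 1)) S →+* E :=
      (Polynomial.evalRingHom (MvPolynomial.C (b 0))).comp e.toAlgHom.toRingHom
    have hgsurj : Surjective g := by
      intro q
      refine ⟨e.symm (Polynomial.C q), ?_⟩
      simp [g]
    set t : MvPolynomial (Fin (n + 1)) S :=
      e.symm (Polynomial.X - Polynomial.C (MvPolynomial.C (b 0))) with htdef
    have hgker : RingHom.ker g = Ideal.span {t} := by
      have h1 : RingHom.ker g =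
          Ideal.comap (e : MvPolynomial (Fin (n + 1)) S ≃+* Polynomial E)
            (RingHom.ker (Polynomial.evalRingHom (MvPolynomial.C (b 0)))) := by
        rfl
      rw [h1, Polynomial.ker_evalRingHom,
        ← Ideal.map_symm, Ideal.map_span, Set.image_singleton]
      rfl
    have ht : t ∈ nonZeroDivisors (MvPolynomial (Fin (n + 1)) S) := by
      rw [mem_nonZeroDivisors_iff_right]
      intro z hz
      have hz' : e z * (Polynomial.X - Polynomial.C (MvPolynomial.C (b 0))) = 0 := by
        have h1 := congrArg e hz
        rw [map_mul, map_zero, htdef, AlgEquiv.apply_symm_apply] at h1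
        exact h1
      have he0 : e z = 0 :=
        (Polynomial.monic_X_sub_C (MvPolynomial.C (b 0))).isRegular.right
          (hz'.trans (zero_mul _).symm)
      simpa using congrArg e.symm he0
    have hg0 : g (MvPolynomial.X 0) = MvPolynomial.C (b 0) := by
      show Polynomial.eval (MvPolynomial.C (b 0)) (e (MvPolynomial.X 0)) = _
      rw [show e (MvPolynomial.X 0) = Polynomial.X from MvPolynomial.finSuccEquiv_X_zero]
      simp
    have hgs : ∀ j : Fin n, g (MvPolynomial.X j.succ) = MvPolynomial.X j := by
      intro j
      show Polynomial.eval (MvPolynomial.C (b 0)) (e (MvPolynomial.X j.succ)) = _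
      rw [show e (MvPolynomial.X j.succ) = Polynomial.C (MvPolynomial.X j) from
        MvPolynomial.finSuccEquiv_X_succ]
      simp
    have hgC : ∀ s : S, g (MvPolynomial.C s) = MvPolynomial.C s := by
      intro s
      show Polynomial.eval (MvPolynomial.C (b 0)) (e (MvPolynomial.C s)) = _
      have hC : e (MvPolynomial.C s) = Polynomial.C (MvPolynomial.C s) := by
        have h1 : (MvPolynomial.C s : MvPolynomial (Fin (n + 1)) S) = algebraMap S _ s := rfl
        rw [h1, AlgEquiv.commutes]
        rfl
      rw [hC]
      simp
    have hcomp : (MvPolynomial.aeval (b ∘ Fin.succ) : E →ₐ[S] S).toRingHom.comp g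
        = (MvPolynomial.aeval b : MvPolynomial (Fin (n + 1)) S →ₐ[S] S).toRingHom := by
      apply MvPolynomial.ringHom_ext
      · intro s
        simp only [RingHom.coe_comp, comp_apply, AlgHom.toRingHom_eq_coe, RingHom.coe_coe]
        rw [hgC s]
        simp
      · intro i
        refine Fin.cases ?_ ?_ i
        · simp only [RingHom.coe_comp, comp_apply, AlgHom.toRingHom_eq_coe, RingHom.coe_coe]
          rw [hg0]
          simp
        · intro j
          simp only [RingHom.coe_comp, comp_apply, AlgHom.toRingHom_eq_coe, RingHom.coe_coe]
          rw [hgs j]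
          simp
    have hker_eq : RingHom.ker (MvPolynomial.aeval b : MvPolynomial (Fin (n + 1)) S →ₐ[S] S)
        = Ideal.comap g
            (RingHom.ker (MvPolynomial.aeval (b ∘ Fin.succ) : E →ₐ[S] S)) := by
      ext x
      simp only [RingHom.mem_ker, Ideal.mem_comap]
      have hx : (MvPolynomial.aeval (b ∘ Fin.succ) : E →ₐ[S] S) (g x)
          = (MvPolynomial.aeval b : MvPolynomial (Fin (n + 1)) S →ₐ[S] S) x := by
        have h1 := DFunLike.congr_fun hcomp x
        simpa using h1
      rw [← hx]
    letI : Algebra (MvPolynomial (Fin (n + 1)) S) E := g.toAlgebra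
    haveI := IH S ‹_› (b ∘ Fin.succ)
    have hres := fp_comap (R := MvPolynomial (Fin (n + 1)) S) (S := E)
      hgsurj hgker ht (RingHom.ker (MvPolynomial.aeval (b ∘ Fin.succ) : E →ₐ[S] S))
    rw [hker_eq]
    exact hres

/-- Let `B` be a finitely presented commutative `A`-algebra,
`μ : B ⊗[A] B → B` the multiplication map and `J = ker μ`.  Then `J` is a finitely
presented module over the ring `B ⊗[A] B`. -/
theorem ker_mul_finitePresentation
    (A B : Type*) [CommRing A] [CommRing B] [Algebra A B]
    [Algebra.FinitePresentation A B] :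
    Module.FinitePresentation (B ⊗[A] B)
      (RingHom.ker (Algebra.TensorProduct.lmul' A : B ⊗[A] B →ₐ[A] B)) := by
  classical
  obtain ⟨m, φ, hφs, hφk⟩ :=
    (inferInstance : Algebra.FinitePresentation B (B ⊗[A] B)).out
  let μ : B ⊗[A] B →ₐ[B] B :=
    { toRingHom := (Algebra.TensorProduct.lmul' A : B ⊗[A] B →ₐ[A] B).toRingHom
      commutes' := fun b => by
        simp [Algebra.TensorProduct.algebraMap_apply] }
  let ψ : MvPolynomial (Fin m) B →ₐ[B] B := μ.comp φ
  have hψ : ψ = MvPolynomial.aeval (ψ ∘ MvPolynomial.X) := MvPolynomial.aeval_unique ψ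
  have hmain := ker_aeval_fp m B ‹_› (ψ ∘ MvPolynomial.X)
  letI : Algebra (MvPolynomial (Fin m) B) (B ⊗[A] B) := φ.toRingHom.toAlgebra
  have hs : Surjective (algebraMap (MvPolynomial (Fin m) B) (B ⊗[A] B)) := hφs
  have hK : Ideal.comap (algebraMap (MvPolynomial (Fin m) B) (B ⊗[A] B))
      (RingHom.ker (Algebra.TensorProduct.lmul' A : B ⊗[A] B →ₐ[A] B))
      = RingHom.ker (MvPolynomial.aeval (ψ ∘ MvPolynomial.X) :
          MvPolynomial (Fin m) B →ₐ[B] B) := by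
    ext x
    simp only [Ideal.mem_comap, RingHom.mem_ker]
    constructor
    · intro hx
      rw [← hψ]
      exact hx
    · intro hx
      rw [← hψ] at hx
      exact hx
  exact fp_map hs hφk _ (hK ▸ hmain)
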